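/- In Q_n, the derivation ∂ with ∂(z_{A,i}) = 1 satisfies ∂Λ_k = (n-k+1)·Λ_{k-1} for each k = 1,...,n, where Λ_k = Λ_k({1,...,n}). -/

import Mathlib

namespace QnPaper

/-- The defining relations of the quadratic algebra `Q_n`:
for `A ⊆ {1,…,n}` and distinct `i, j ∉ A`,
`z_{A∪{i},j} + z_{A,i} = z_{A∪{j},i} + z_{A,j}` and
`z_{A∪{i},j} * z_{A,i} = z_{A∪{j},i} * z_{A,j}`. -/
inductive QRel (k : Type) [Field k] (n : ℕ) :
    FreeAlgebra k (Finset (Fin n) × Fin n) → FreeAlgebra k (Finset (Fin n) × Fin n) → Prop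
  | add_rel (A : Finset (Fin n)) (i j : Fin n) (hi : i ∉ A) (hj : j ∉ A) (hij : i ≠ j) :
      QRel k n (FreeAlgebra.ι k (insert i A, j) + FreeAlgebra.ι k (A, i))
        (FreeAlgebra.ι k (insert j A, i) + FreeAlgebra.ι k (A, j))
  | mul_rel (A : Finset (Fin n)) (i j : Fin n) (hi : i ∉ A) (hj : j ∉ A) (hij : i ≠ j) :
      QRel k n (FreeAlgebra.ι k (insert i A, j) * FreeAlgebra.ι k (A, i))
        (FreeAlgebra.ι k (insert j A, i) * FreeAlgebra.ι k (A, j))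

/-- The quadratic algebra `Q_n`. -/
abbrev Q (k : Type) [Field k] (n : ℕ) := RingQuot (QRel k n)

/-- The generator `z_{A,i}` of `Q_n` (only meaningful when `i ∉ A`). -/
def z (k : Type) [Field k] (n : ℕ) (A : Finset (Fin n)) (i : Fin n) : Q k n :=
  RingQuot.mkAlgHom k (QRel k n) (FreeAlgebra.ι k (A, i))
/-- `y_i = z_{{1,…,i-1},i}`. -/
def y (k : Type) [Field k] (n : ℕ) (i : Fin n) : Q k n := z k n (Finset.Iio i) i
/-- `Λ_m = ∑_{i₁ > ⋯ > i_m} y_{i₁}⋯y_{i_m}` where `y_i = z_{{1,…,i-1},i}`. -/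
noncomputable def LamSum (k : Type) [Field k] (n : ℕ) (m : ℕ) : Q k n :=
  ∑ S ∈ Finset.powersetCard m (Finset.univ : Finset (Fin n)),
    ((S.sort (· ≤ ·)).reverse.map (y k n)).prod

section Aux

variable (k : Type) [Field k] (n : ℕ)

/-- Product of `y` over a finset in decreasing order. -/
noncomputable def P (S : Finset (Fin n)) : Q k n :=
  ((S.sort (· ≤ ·)).reverse.map (y k n)).prod

lemma P_insert_min {a : Fin n} {S : Finset (Fin n)} (h : ∀ x ∈ S, a < x) :
    P k n (insert a S) = P k n S * y k n a := by
  have ha : a ∉ S := fun hmem => lt_irrefl a (h a hmem)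
  unfold P
  rw [Finset.sort_insert (· ≤ ·) (fun b hb => (h b hb).le) ha]
  simp

lemma d_y (d : Q k n →ₗ[k] Q k n)
    (hgen : ∀ (A : Finset (Fin n)) (i : Fin n), i ∉ A → d (z k n A i) = 1)
    (i : Fin n) : d (y k n i) = 1 :=
  hgen _ i (by simp)

lemma d_one (d : Q k n →ₗ[k] Q k n)
    (hleib : ∀ a b : Q k n, d (a * b) = d a * b + a * d b) : d (1 : Q k n) = 0 := by
  have := hleib 1 1
  simp at this
  exact this

lemma d_P (d : Q k n →ₗ[k] Q k n)
    (hleib : ∀ a b : Q k n, d (a * b) = d a * b + a * d b)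
    (hgen : ∀ (A : Finset (Fin n)) (i : Fin n), i ∉ A → d (z k n A i) = 1)
    (S : Finset (Fin n)) :
    d (P k n S) = ∑ x ∈ S, P k n (S.erase x) := by
  induction S using Finset.induction_on_min with
  | empty => simpa [P] using d_one k n d hleib
  | insert a S hlt ih =>
    have ha : a ∉ S := fun hmem => lt_irrefl a (hlt a hmem)
    rw [P_insert_min k n hlt, hleib, ih, d_y k n d hgen,
      Finset.sum_insert ha, Finset.erase_insert ha, mul_one]
    have herase : ∀ x ∈ S, P k n ((insert a S).erase x)
        = P k n (S.erase x) * y k n a := by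
      intro x hx
      have hax : a ≠ x := by rintro rfl; exact ha hx
      rw [Finset.erase_insert_of_ne hax,
        P_insert_min k n (fun b hb => hlt b (Finset.mem_of_mem_erase hb))]
    rw [Finset.sum_congr rfl herase, ← Finset.sum_mul]
    exact add_comm _ _

end Aux

/-- Any derivation `∂` of `Q_n` with `∂(z_{A,i}) = 1` satisfies
`∂Λ_m = (n - m + 1)·Λ_{m-1}` for `1 ≤ m ≤ n`. -/
theorem stmt13 (k : Type) [Field k] (n : ℕ) (d : Q k n →ₗ[k] Q k n)
    (hleib : ∀ a b : Q k n, d (a * b) = d a * b + a * d b)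
    (hgen : ∀ (A : Finset (Fin n)) (i : Fin n), i ∉ A → d (z k n A i) = 1)
    (m : ℕ) (hm1 : 1 ≤ m) (hmn : m ≤ n) :
    d (LamSum k n m) = (n - m + 1) • LamSum k n (m - 1) := by
  have hLam : ∀ m', LamSum k n m' =
      ∑ S ∈ Finset.powersetCard m' (Finset.univ : Finset (Fin n)), P k n S := by
    intro m'; rfl
  rw [hLam, map_sum]
  have h1 : ∀ S ∈ Finset.powersetCard m (Finset.univ : Finset (Fin n)),
      d (P k n S) = ∑ x ∈ S, P k n (S.erase x) :=
    fun S _ => d_P k n d hleib hgen S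
  rw [Finset.sum_congr rfl h1]
  -- reindex: pairs (S, x) with x ∈ S, |S| = m  ↔  pairs (T, x) with x ∉ T, |T| = m-1
  rw [Finset.sum_sigma']
  have key : ∑ p ∈ (Finset.powersetCard m (Finset.univ : Finset (Fin n))).sigma
        (fun S => S), P k n (p.1.erase p.2)
      = ∑ p ∈ (Finset.powersetCard (m-1) (Finset.univ : Finset (Fin n))).sigma
        (fun T => Tᶜ), P k n p.1 := by
    refine Finset.sum_bij' (fun p _ => ⟨p.1.erase p.2, p.2⟩)
      (fun p _ => ⟨insert p.2 p.1, p.2⟩) ?_ ?_ ?_ ?_ ?_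
    · rintro ⟨S, x⟩ hp
      simp only [Finset.mem_sigma, Finset.mem_powersetCard_univ] at hp ⊢
      simp only [Finset.mem_compl, Finset.mem_erase]
      refine ⟨?_, fun h => h.1 rfl⟩
      rw [Finset.card_erase_of_mem hp.2, hp.1]
    · rintro ⟨T, x⟩ hp
      simp only [Finset.mem_sigma, Finset.mem_powersetCard_univ, Finset.mem_compl] at hp ⊢
      refine ⟨?_, Finset.mem_insert_self _ _⟩
      rw [Finset.card_insert_of_notMem hp.2, hp.1]
      omega
    · rintro ⟨S, x⟩ hp
      simp only [Finset.mem_sigma, Finset.mem_powersetCard_univ] at hp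
      simp [Finset.insert_erase hp.2]
    · rintro ⟨T, x⟩ hp
      simp only [Finset.mem_sigma, Finset.mem_powersetCard_univ, Finset.mem_compl] at hp
      simp [Finset.erase_insert hp.2]
    · rintro ⟨S, x⟩ hp
      rfl
  rw [key, Finset.sum_sigma, hLam, Finset.smul_sum]
  refine Finset.sum_congr rfl fun T hT => ?_
  dsimp only
  rw [Finset.sum_const]
  congr 1
  simp only [Finset.mem_powersetCard_univ] at hT
  rw [Finset.card_compl, hT, Fintype.card_fin]
  omega


end QnPaper
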